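/- For a fixed positive integer s, the generating function H_{s,i}(x) = ∑_{j≥i+1} h_{s,i,j} x^j satisfies, for i ≥ 1, the differential recurrence H_{s,i}(x) = -(s x / i - 1) H_{s,i-1}(x) + (x(x-1)/i) H'_{s,i-1}(x), where H' is the derivative with respect to x. -/

import Mathlib

/-- The two-dimensional coefficient sequence of the paper. -/
def h (s : ℕ) : ℕ → ℕ → ℚ
  | 0, j => if j ≤ 0 then 0 else (Nat.choose (s + j - 1) j : ℚ) * ((s : ℚ) - j) / s
  | i + 1, j =>
      if j ≤ i + 1 then 0
      else -(((s : ℚ) - j + 1) / (i + 1 : ℚ)) * h s i (j - 1)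
           - (((j : ℚ) - (i + 1 : ℚ)) / (i + 1 : ℚ)) * h s i j

lemma h_zero (s i j : ℕ) (hj : j ≤ i) : h s i j = 0 := by
  cases i with
  | zero => simp [h, Nat.le_zero.mp hj]
  | succ k => simp [h, hj]

/-- The generating functions of the rows of the sequence satisfy, for i ≥ 1,
the differential recurrence of the paper. -/
theorem stmt12 (s : ℕ) (hs : 1 ≤ s) (i : ℕ) (hi : 1 ≤ i) :
    PowerSeries.mk (fun j => h s i j)
      = -(PowerSeries.C (R := ℚ) ((s : ℚ) / i) * PowerSeries.X - 1) *
          PowerSeries.mk (fun j => h s (i - 1) j)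
        + PowerSeries.C (R := ℚ) (1 / (i : ℚ)) * (PowerSeries.X * (PowerSeries.X - 1)) *
            (PowerSeries.derivative ℚ (PowerSeries.mk (fun j => h s (i - 1) j))) := by
  obtain ⟨k, rfl⟩ : ∃ k, i = k + 1 := ⟨i - 1, (Nat.succ_pred_eq_of_pos hi).symm⟩
  simp only [Nat.add_sub_cancel]
  set f := PowerSeries.mk (fun j => h s k j) with hf
  set D := PowerSeries.derivative ℚ f with hD
  have expand :
      -(PowerSeries.C (R := ℚ) ((s : ℚ) / (k+1 : ℕ)) * PowerSeries.X - 1) * f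
        + PowerSeries.C (R := ℚ) (1 / ((k+1 : ℕ) : ℚ)) * (PowerSeries.X * (PowerSeries.X - 1)) * D
      = f - PowerSeries.C (R := ℚ) ((s : ℚ) / (k+1 : ℕ)) * (PowerSeries.X * f)
          + PowerSeries.C (R := ℚ) (1 / ((k+1 : ℕ) : ℚ)) * (PowerSeries.X * (PowerSeries.X * D))
          - PowerSeries.C (R := ℚ) (1 / ((k+1 : ℕ) : ℚ)) * (PowerSeries.X * D) := by
    ring
  rw [expand]
  ext j
  simp only [map_sub, map_add, PowerSeries.coeff_C_mul, PowerSeries.coeff_mk]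
  match j with
  | 0 =>
    rw [PowerSeries.coeff_zero_X_mul, PowerSeries.coeff_zero_X_mul, PowerSeries.coeff_zero_X_mul]
    simp [h, hf, PowerSeries.constantCoeff_mk]
    exact (h_zero s k 0 (Nat.zero_le k)).symm
  | 1 =>
    rw [PowerSeries.coeff_succ_X_mul, PowerSeries.coeff_succ_X_mul, PowerSeries.coeff_succ_X_mul,
      PowerSeries.coeff_zero_X_mul, hD, PowerSeries.coeff_derivative]
    simp only [hf, PowerSeries.coeff_mk]
    have h0 : h s k 0 = 0 := h_zero s k 0 (Nat.zero_le k)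
    have hk1 : h s (k+1) 1 = 0 := h_zero s (k+1) 1 (by omega)
    rw [h0, hk1]
    rcases Nat.eq_zero_or_pos k with rfl | hk
    · push_cast; ring
    · have : h s k 1 = 0 := h_zero s k 1 hk
      rw [this]; ring
  | (n+2) =>
    rw [PowerSeries.coeff_succ_X_mul, PowerSeries.coeff_succ_X_mul, PowerSeries.coeff_succ_X_mul,
      PowerSeries.coeff_succ_X_mul, hD, PowerSeries.coeff_derivative, PowerSeries.coeff_derivative,
      PowerSeries.coeff_mk, PowerSeries.coeff_mk]
    -- goal: h s (k+1) (n+2) = h s k (n+2) - s/(k+1) * h s k (n+1)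
    --   + 1/(k+1) * (h s k (n+1) * (n+1)) - 1/(k+1) * (h s k (n+2) * (n+2))
    by_cases hle : n + 2 ≤ k + 1
    · have h1 : h s (k+1) (n+2) = 0 := h_zero _ _ _ hle
      have h2 : h s k (n+1) = 0 := h_zero _ _ _ (by omega)
      rcases Nat.lt_or_ge (n+2) (k+1) with hlt | hge
      · have h3 : h s k (n+2) = 0 := h_zero _ _ _ (by omega)
        rw [h1, h2, h3]; ring
      · have hkn : k = n + 1 := by omega
        subst hkn
        rw [h1, h2]
        push_cast
        field_simp
        ring
    · have hrec : h s (k+1) (n+2) =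
          -(((s : ℚ) - (n+2) + 1) / (k + 1 : ℚ)) * h s k (n + 1)
          - ((((n+2) : ℚ) - (k + 1 : ℚ)) / (k + 1 : ℚ)) * h s k (n+2) := by
        simp [h, hle]
      rw [hrec]
      have hk1 : ((k : ℚ) + 1) ≠ 0 := by positivity
      push_cast
      field_simp
      ring
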